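/- Let f: ℝ^{m×n} → ℝ be L-smooth, bounded below by f⋆, and suppose each subproblem g^k(B) = f(W^k + P^k B) + (1/(2η))‖B‖² is solved to expected ε-inexactness with η < 1/L̂, L̂ = (m/r)L. Then with μ := 1/η − L̂, the iterates satisfy (1/K)∑_{k=0}^{K−1} (μ/2)𝔼‖B⋆^k‖² ≤ (f(W^0) − f⋆)/K + ε, where B⋆^k is the exact minimizer of g^k. -/

import Mathlib

open MeasureTheory ProbabilityTheory Matrix
open scoped BigOperators

instance matrixMeasurableSpace (m r : ℕ) :
    MeasurableSpace (Matrix (Fin m) (Fin r) ℝ) := MeasurableSpace.pi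

attribute [local instance] Matrix.normedAddCommGroup Matrix.normedSpace

/-- The action `B ↦ PB` of `P ∈ ℝ^{m×r}` on `B ∈ ℝ^{r×n}`, between Euclidean
(Frobenius) spaces of matrices. -/
noncomputable def app {m n r : ℕ} (P : Matrix (Fin m) (Fin r) ℝ)
    (B : EuclideanSpace ℝ (Fin r × Fin n)) : EuclideanSpace ℝ (Fin m × Fin n) :=
  WithLp.toLp 2 (fun p : Fin m × Fin n => ∑ k, P p.1 k * B (k, p.2))


open InnerProductSpace

lemma descent_lower {E : Type*} [NormedAddCommGroup E] [InnerProductSpace ℝ E] [CompleteSpace E]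
    (f : E → ℝ) (L : ℝ) (hdiff : Differentiable ℝ f)
    (hsmooth : ∀ X Y : E, ‖gradient f X - gradient f Y‖ ≤ L * ‖X - Y‖) (x y : E) :
    f x + inner ℝ (gradient f x) (y - x) - L / 2 * ‖y - x‖ ^ 2 ≤ f y := by
  set v := y - x with hv
  set h : ℝ → ℝ := fun t => f (x + t • v) - t * inner ℝ (gradient f x) v
      + (L / 2 * ‖v‖ ^ 2) * t ^ 2 with hh
  have hder : ∀ t : ℝ, HasDerivAt h
      ((inner ℝ (gradient f (x + t • v)) v : ℝ) - inner ℝ (gradient f x) v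
        + (L / 2 * ‖v‖ ^ 2) * (2 * t)) t := by
    intro t
    have hc : HasDerivAt (fun t : ℝ => x + t • v) v t := by
      simpa using ((hasDerivAt_id t).smul_const v).const_add x
    have h1 : HasDerivAt (fun t : ℝ => f (x + t • v))
        ((inner ℝ (gradient f (x + t • v)) v : ℝ)) t := by
      have := ((hdiff (x + t • v)).hasGradientAt.hasFDerivAt).comp_hasDerivAt t hc
      simpa [toDual_apply_apply, Function.comp_def] using this
    have h2 : HasDerivAt (fun t : ℝ => t * inner ℝ (gradient f x) v)
        ((inner ℝ (gradient f x) v : ℝ)) t := by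
      simpa using (hasDerivAt_id t).mul_const (inner ℝ (gradient f x) v : ℝ)
    have h3 : HasDerivAt (fun t : ℝ => (L / 2 * ‖v‖ ^ 2) * t ^ 2)
        ((L / 2 * ‖v‖ ^ 2) * (2 * t)) t := by
      have := (hasDerivAt_pow 2 t).const_mul (L / 2 * ‖v‖ ^ 2)
      exact this.congr_deriv (by ring)
    exact (h1.sub h2).add h3
  have hmono : MonotoneOn h (Set.Icc (0:ℝ) 1) := by
    apply monotoneOn_of_deriv_nonneg (convex_Icc 0 1)
    · exact fun t _ => ((hder t).differentiableAt.continuousAt).continuousWithinAt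
    · intro t ht
      exact (hder t).differentiableAt.differentiableWithinAt
    · intro t ht
      rw [(hder t).deriv]
      have ht' : 0 ≤ t := by
        rcases (Set.mem_Ioo.mp (by simpa using ht)) with ⟨h1, _⟩
        exact le_of_lt h1
      have hb : (inner ℝ (gradient f x - gradient f (x + t • v)) v : ℝ)
          ≤ L * (t * ‖v‖) * ‖v‖ := by
        calc (inner ℝ (gradient f x - gradient f (x + t • v)) v : ℝ)
            ≤ ‖gradient f x - gradient f (x + t • v)‖ * ‖v‖ := real_inner_le_norm _ _
          _ ≤ (L * ‖x - (x + t • v)‖) * ‖v‖ := by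
              gcongr; exact hsmooth _ _
          _ = L * (t * ‖v‖) * ‖v‖ := by
              rw [show x - (x + t • v) = -(t • v) by abel, norm_neg, norm_smul,
                Real.norm_eq_abs, abs_of_nonneg ht']
      have := hb
      rw [inner_sub_left] at this
      nlinarith [this]
  have h01 : h 0 ≤ h 1 := hmono (by simp) (by norm_num) zero_le_one
  have e0 : h 0 = f x := by simp [hh]
  have e1 : h 1 = f y - inner ℝ (gradient f x) v + L / 2 * ‖v‖ ^ 2 := by
    simp [hh, hv]
  rw [e0, e1] at h01
  linarith

noncomputable def appCLM {m n r : ℕ} (P : Matrix (Fin m) (Fin r) ℝ) :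
    EuclideanSpace ℝ (Fin r × Fin n) →L[ℝ] EuclideanSpace ℝ (Fin m × Fin n) :=
  LinearMap.toContinuousLinearMap
    { toFun := app P
      map_add' := by
        intro B C; ext p
        simp [app, mul_add, Finset.sum_add_distrib]
      map_smul' := by
        intro t B; ext p
        simp [app, Finset.mul_sum]
        congr 1; funext k; ring }

lemma appCLM_apply {m n r : ℕ} (P : Matrix (Fin m) (Fin r) ℝ)
    (B : EuclideanSpace ℝ (Fin r × Fin n)) : appCLM P B = app P B := rfl

lemma app_norm_sq {m n r : ℕ} (c : ℝ) (P : Matrix (Fin m) (Fin r) ℝ)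
    (hP : Pᵀ * P = c • (1 : Matrix (Fin r) (Fin r) ℝ))
    (B : EuclideanSpace ℝ (Fin r × Fin n)) :
    ‖app P B‖ ^ 2 = c * ‖B‖ ^ 2 := by
  have hsum : ∀ b : Fin r → ℝ, ∑ i, (∑ k, P i k * b k) ^ 2 = c * ∑ k, b k ^ 2 := by
    intro b
    have h1 : ∑ i, (∑ k, P i k * b k) ^ 2 = (P *ᵥ b) ⬝ᵥ (P *ᵥ b) := by
      simp [dotProduct, mulVec, sq]
    rw [h1, Matrix.dotProduct_mulVec (P *ᵥ b) P b, ← Matrix.mulVec_transpose,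
      Matrix.mulVec_mulVec, hP, Matrix.smul_mulVec, Matrix.one_mulVec]
    simp [dotProduct, Finset.mul_sum, sq, mul_assoc]
  have hn1 : ‖app P B‖ ^ 2 = ∑ p : Fin m × Fin n, (app P B p) ^ 2 := by
    rw [EuclideanSpace.norm_eq, Real.sq_sqrt (by positivity)]
    simp [sq_abs]
  have hn2 : ‖B‖ ^ 2 = ∑ p : Fin r × Fin n, (B p) ^ 2 := by
    rw [EuclideanSpace.norm_eq, Real.sq_sqrt (by positivity)]
    simp [sq_abs]
  rw [hn1, hn2, Fintype.sum_prod_type, Fintype.sum_prod_type]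
  calc ∑ i : Fin m, ∑ j : Fin n, (app P B (i, j)) ^ 2
      = ∑ j : Fin n, ∑ i : Fin m, (app P B (i, j)) ^ 2 := Finset.sum_comm
    _ = ∑ j : Fin n, c * ∑ k : Fin r, (B (k, j)) ^ 2 := by
        refine Finset.sum_congr rfl fun j _ => ?_
        simpa [app] using hsum (fun k => B (k, j))
    _ = c * ∑ k : Fin r, ∑ j : Fin n, (B (k, j)) ^ 2 := by
        rw [← Finset.mul_sum, Finset.sum_comm]

lemma foc {m n r : ℕ} (η : ℝ) (hη : 0 < η)
    (f : EuclideanSpace ℝ (Fin m × Fin n) → ℝ) (hdiff : Differentiable ℝ f)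
    (W : EuclideanSpace ℝ (Fin m × Fin n)) (P : Matrix (Fin m) (Fin r) ℝ)
    (Bs : EuclideanSpace ℝ (Fin r × Fin n))
    (hmin : IsMinOn (fun B => f (W + app P B) + (1 / (2 * η)) * ‖B‖ ^ 2) Set.univ Bs) :
    (inner ℝ (gradient f (W + app P Bs)) (app P Bs) : ℝ) = -(1 / η) * ‖Bs‖ ^ 2 := by
  set Y := W + app P Bs with hY
  have hA : HasFDerivAt (fun B : EuclideanSpace ℝ (Fin r × Fin n) => W + appCLM P B)
      (appCLM P) Bs := ((appCLM P).hasFDerivAt).const_add W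
  have h1 : HasFDerivAt (fun B : EuclideanSpace ℝ (Fin r × Fin n) => f (W + app P B))
      (((toDual ℝ _) (gradient f Y)).comp (appCLM P)) Bs := by
    have := ((hdiff Y).hasGradientAt.hasFDerivAt).comp Bs hA
    exact this
  have h2 : HasFDerivAt (fun B : EuclideanSpace ℝ (Fin r × Fin n) => (1 / (2 * η)) * ‖B‖ ^ 2)
      ((1 / (2 * η)) • (2 • (innerSL ℝ Bs))) Bs :=
    (hasStrictFDerivAt_norm_sq Bs).hasFDerivAt.const_mul (1 / (2 * η))
  have hD := h1.add h2
  have hzero : (((toDual ℝ _) (gradient f Y)).comp (appCLM P)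
      + (1 / (2 * η)) • (2 • (innerSL ℝ Bs))) = 0 :=
    (hmin.isLocalMin Filter.univ_mem).hasFDerivAt_eq_zero hD
  have := congrFun (congrArg (DFunLike.coe) hzero) Bs
  simp only [ContinuousLinearMap.add_apply, ContinuousLinearMap.comp_apply,
    ContinuousLinearMap.smul_apply, ContinuousLinearMap.zero_apply, innerSL_apply_apply,
    toDual_apply_apply, appCLM_apply, smul_eq_mul, real_inner_self_eq_norm_sq] at this
  have h2η : η ≠ 0 := ne_of_gt hη
  field_simp at this ⊢
  simp only [nsmul_eq_mul, Nat.cast_ofNat] at this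
  linarith

/-- In the RSO method with `η < 1/L̂`, `L̂ = (m/r)L` and `μ := 1/η − L̂`, the exact
subproblem minimizers satisfy
`(1/K)∑_{k<K} (μ/2)𝔼‖B⋆^k‖² ≤ (f(W⁰) − f⋆)/K + ε`. -/
theorem stmt_9 (m n r : ℕ) (hm : 0 < m) (hr : 0 < r) (L Lhat η mupar ε fstar : ℝ)
    (hL : 0 < L) (hLhat : Lhat = ((m : ℝ) / (r : ℝ)) * L)
    (hη : 0 < η) (hη' : η < 1 / Lhat) (hmupar : mupar = 1 / η - Lhat)
    (hε : 0 ≤ ε)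
    (f : EuclideanSpace ℝ (Fin m × Fin n) → ℝ)
    (hdiff : Differentiable ℝ f)
    (hsmooth : ∀ X Y, ‖gradient f X - gradient f Y‖ ≤ L * ‖X - Y‖)
    (hbdd : ∀ X, fstar ≤ f X)
    (Ω : Type*) [MeasurableSpace Ω] (μ : Measure Ω) [IsProbabilityMeasure μ]
    (W : ℕ → Ω → EuclideanSpace ℝ (Fin m × Fin n))
    (P : ℕ → Ω → Matrix (Fin m) (Fin r) ℝ)
    (Btil Bstar : ℕ → Ω → EuclideanSpace ℝ (Fin r × Fin n))
    (W0 : EuclideanSpace ℝ (Fin m × Fin n))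
    (hW0 : ∀ ω, W 0 ω = W0)
    (hPorth : ∀ k ω, (P k ω)ᵀ * P k ω = ((m : ℝ) / (r : ℝ)) • (1 : Matrix (Fin r) (Fin r) ℝ))
    (hPsecond : ∀ k, ∫ ω, P k ω * (P k ω)ᵀ ∂μ = (1 : Matrix (Fin m) (Fin m) ℝ))
    (hPint : ∀ k, @Integrable _ _ SeminormedAddGroup.toContinuousENorm _ _ (fun ω => P k ω * (P k ω)ᵀ) μ)
    (hindep : ∀ k, IndepFun (P k) (W k) μ)
    (g : ℕ → Ω → EuclideanSpace ℝ (Fin r × Fin n) → ℝ)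
    (hg : ∀ k ω B, g k ω B = f (W k ω + app (P k ω) B) + (1 / (2 * η)) * ‖B‖ ^ 2)
    (hstar : ∀ k ω, IsMinOn (g k ω) Set.univ (Bstar k ω))
    (hinexact : ∀ k, ∫ ω, (g k ω (Btil k ω) - g k ω (Bstar k ω)) ∂μ ≤ ε)
    (hinexact_int : ∀ k, Integrable (fun ω => g k ω (Btil k ω) - g k ω (Bstar k ω)) μ)
    (hupdate : ∀ k ω, W (k + 1) ω = W k ω + app (P k ω) (Btil k ω))
    (hBint : ∀ k, Integrable (fun ω => ‖Bstar k ω‖ ^ 2) μ)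
    (K : ℕ) (hK : 0 < K) :
    (1 / (K : ℝ)) * ∑ k ∈ Finset.range K, (mupar / 2) * ∫ ω, ‖Bstar k ω‖ ^ 2 ∂μ
      ≤ (f W0 - fstar) / K + ε := by

  classical
  have hrpos : (0:ℝ) < r := by exact_mod_cast hr
  have hmpos : (0:ℝ) < m := by exact_mod_cast hm
  have hc : (0:ℝ) < (m:ℝ)/r := by positivity
  have key : ∀ k ω, mupar / 2 * ‖Bstar k ω‖ ^ 2
      ≤ f (W k ω) - f (W (k+1) ω) + (g k ω (Btil k ω) - g k ω (Bstar k ω)) := by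
    intro k ω
    set Wk := W k ω with hWk
    set Pk := P k ω with hPk
    set Bs := Bstar k ω with hBs
    set Y := Wk + app Pk Bs with hY
    have hgfun : g k ω = fun B => f (Wk + app Pk B) + (1 / (2 * η)) * ‖B‖ ^ 2 :=
      funext (hg k ω)
    have hmin : IsMinOn (fun B => f (Wk + app Pk B) + (1 / (2 * η)) * ‖B‖ ^ 2)
        Set.univ Bs := by rw [← hgfun]; exact hstar k ω
    have hfoc := foc η hη f hdiff Wk Pk Bs hmin
    have hns := app_norm_sq ((m:ℝ)/r) Pk (hPorth k ω) Bs
    have hdes := descent_lower f L hdiff hsmooth Y Wk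
    have hWkY : Wk - Y = -(app Pk Bs) := by rw [hY]; abel
    have hinner : (inner ℝ (gradient f Y) (Wk - Y) : ℝ) = (1/η) * ‖Bs‖ ^ 2 := by
      rw [hWkY, inner_neg_right, hfoc]; ring
    have hnorm : ‖Wk - Y‖ ^ 2 = ((m:ℝ)/r) * ‖Bs‖ ^ 2 := by
      rw [hWkY, norm_neg, hns]
    rw [hinner, hnorm] at hdes
    have hgBs : g k ω Bs = f Y + (1 / (2 * η)) * ‖Bs‖ ^ 2 := hg k ω Bs
    have hup : f (W (k+1) ω) ≤ g k ω (Btil k ω) := by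
      rw [hg k ω (Btil k ω), hupdate k ω]
      have : (0:ℝ) ≤ (1 / (2 * η)) * ‖Btil k ω‖ ^ 2 := by positivity
      linarith
    have hmu2 : mupar / 2 = 1 / (2 * η) - Lhat / 2 := by
      rw [hmupar]; field_simp
    have hLc : L / 2 * (((m:ℝ)/r) * ‖Bs‖ ^ 2) = Lhat / 2 * ‖Bs‖ ^ 2 := by
      rw [hLhat]; ring
    have hη2 : 1 / η * ‖Bs‖ ^ 2 - 1 / (2 * η) * ‖Bs‖ ^ 2 = 1 / (2 * η) * ‖Bs‖ ^ 2 := by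
      have : η ≠ 0 := ne_of_gt hη
      field_simp; ring
    nlinarith [hdes, hup, hgBs]
  have keysum : ∀ ω, ∑ k ∈ Finset.range K, mupar / 2 * ‖Bstar k ω‖ ^ 2
      ≤ (f W0 - fstar) + ∑ k ∈ Finset.range K,
          (g k ω (Btil k ω) - g k ω (Bstar k ω)) := by
    intro ω
    have htel : ∑ k ∈ Finset.range K, (f (W k ω) - f (W (k+1) ω))
        = f (W 0 ω) - f (W K ω) := Finset.sum_range_sub' (fun k => f (W k ω)) K
    calc ∑ k ∈ Finset.range K, mupar / 2 * ‖Bstar k ω‖ ^ 2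
        ≤ ∑ k ∈ Finset.range K, (f (W k ω) - f (W (k+1) ω)
            + (g k ω (Btil k ω) - g k ω (Bstar k ω))) :=
          Finset.sum_le_sum fun k _ => key k ω
      _ = (f (W 0 ω) - f (W K ω)) + ∑ k ∈ Finset.range K,
            (g k ω (Btil k ω) - g k ω (Bstar k ω)) := by
          rw [Finset.sum_add_distrib, htel]
      _ ≤ (f W0 - fstar) + ∑ k ∈ Finset.range K,
            (g k ω (Btil k ω) - g k ω (Bstar k ω)) := by
          rw [hW0 ω]
          have := hbdd (W K ω)
          linarith
  have hSint : Integrable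
      (fun ω => ∑ k ∈ Finset.range K, mupar / 2 * ‖Bstar k ω‖ ^ 2) μ :=
    integrable_finset_sum _ fun k _ => (hBint k).const_mul _
  have hTint : Integrable (fun ω => (f W0 - fstar) + ∑ k ∈ Finset.range K,
      (g k ω (Btil k ω) - g k ω (Bstar k ω))) μ :=
    (integrable_const _).add (integrable_finset_sum _ fun k _ => hinexact_int k)
  have hle := integral_mono hSint hTint keysum
  rw [integral_finset_sum _ (fun k _ => (hBint k).const_mul _)] at hle
  rw [integral_add (integrable_const _)
    (integrable_finset_sum _ fun k _ => hinexact_int k)] at hle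
  rw [integral_finset_sum _ (fun k _ => hinexact_int k), integral_const] at hle
  simp only [measure_univ, probReal_univ, ENNReal.toReal_one, one_smul, one_mul, smul_eq_mul] at hle
  have hsum2 : ∑ k ∈ Finset.range K, ∫ ω, (g k ω (Btil k ω) - g k ω (Bstar k ω)) ∂μ
      ≤ K * ε := by
    calc ∑ k ∈ Finset.range K, ∫ ω, (g k ω (Btil k ω) - g k ω (Bstar k ω)) ∂μ
        ≤ ∑ _k ∈ Finset.range K, ε := Finset.sum_le_sum fun k _ => hinexact k
      _ = K * ε := by simp [mul_comm]
  have hmain : ∑ k ∈ Finset.range K, (mupar / 2) * ∫ ω, ‖Bstar k ω‖ ^ 2 ∂μ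
      ≤ (f W0 - fstar) + K * ε := by
    have : ∀ k, ∫ ω, mupar / 2 * ‖Bstar k ω‖ ^ 2 ∂μ
        = (mupar / 2) * ∫ ω, ‖Bstar k ω‖ ^ 2 ∂μ := fun k => integral_const_mul _ _
    simp_rw [this] at hle
    linarith
  have hKpos : (0:ℝ) < K := by exact_mod_cast hK
  calc (1 / (K : ℝ)) * ∑ k ∈ Finset.range K, (mupar / 2) * ∫ ω, ‖Bstar k ω‖ ^ 2 ∂μ
      ≤ (1 / (K : ℝ)) * ((f W0 - fstar) + K * ε) := by
        have h1K : (0:ℝ) ≤ 1 / (K:ℝ) := by positivity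
        exact mul_le_mul_of_nonneg_left hmain h1K
    _ = (f W0 - fstar) / K + ε := by field_simp
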